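/- Let γ ∈ (0,1) and let D′ be a digraph on at most n vertices containing a family F of f pairwise vertex-disjoint absorbing 4-paths with f ≥ γ²n and |F| ≤ γn, such that for every ordered vertex pair (u, v) of D′ one has |A_{uv} ∩ F| ≥ γ²n. Then for any real β > 0 and any integer l with βf < l < (1 − β)f, and n sufficiently large, there exists a partition F = F_1 ∪ F_2 with |F_1| = l and |F_2| = f − l such that for every ordered vertex pair (u, v) of D′ − V(F), both F_1 and F_2 contain an absorber for (u, v). -/

import Mathlib

open scoped Classical

/-- The list of vertices of a quadruple. -/
def quadList {V : Type*} (z : V × V × V × V) : List V := [z.1, z.2.1, z.2.2.1, z.2.2.2]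

/-- `z` records a 4-path `z₁z₂z₃z₄` of the digraph `A`. -/
def IsFourPath {V : Type*} (A : V → V → Prop) (z : V × V × V × V) : Prop :=
  (quadList z).Nodup ∧ (quadList z).Chain' A

/-- The 4-path `z = z₁z₂z₃z₄` absorbs the ordered pair `(u, v)`: `z₂u` and `vz₃` are arcs. -/
def AbsorbsPair {V : Type*} (A : V → V → Prop) (z : V × V × V × V) (u v : V) : Prop :=
  A z.2.1 u ∧ A v z.2.2.1

/-- Greedy covering: a ground set `Fs` and a family of subsets `S i ⊆ Fs`, each of size
at least `μ > 0`; then there is `T ⊆ Fs` of size at most `k` such that the number of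
sets disjoint from `T` is at most `(1 - μ/|Fs|)^k |I|`. -/
lemma greedy_transversal {α ι : Type*} [DecidableEq α] [DecidableEq ι]
    (μ : ℝ) (hμ : 0 < μ) (Fs : Finset α) :
    ∀ (k : ℕ) (I : Finset ι) (S : ι → Finset α),
      (∀ i ∈ I, S i ⊆ Fs) → (∀ i ∈ I, μ ≤ ((S i).card : ℝ)) →
      ∃ T ⊆ Fs, T.card ≤ k ∧
        (((I.filter (fun i => Disjoint (S i) T)).card : ℝ)
          ≤ (1 - μ / Fs.card) ^ k * I.card) := by
  intro k
  induction k with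
  | zero =>
    intro I S hsub hcard
    refine ⟨∅, Finset.empty_subset _, le_rfl, ?_⟩
    rw [pow_zero, one_mul]
    exact_mod_cast Finset.card_filter_le _ _
  | succ k ih =>
    intro I S hsub hcard
    rcases I.eq_empty_or_nonempty with rfl | hne
    · exact ⟨∅, Finset.empty_subset _, Nat.zero_le _, by simp⟩
    obtain ⟨i₀, hi₀⟩ := hne
    have hSi₀ : (0:ℝ) < (S i₀).card := lt_of_lt_of_le hμ (hcard i₀ hi₀)
    have hfpos : (0:ℝ) < Fs.card := by
      have := Finset.card_le_card (hsub i₀ hi₀)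
      have : ((S i₀).card : ℝ) ≤ Fs.card := by exact_mod_cast this
      linarith
    have hr0 : 0 ≤ 1 - μ / Fs.card := by
      have h1 : μ ≤ ((S i₀).card : ℝ) := hcard i₀ hi₀
      have h2 : ((S i₀).card : ℝ) ≤ Fs.card := by
        exact_mod_cast Finset.card_le_card (hsub i₀ hi₀)
      have : μ / Fs.card ≤ 1 := by
        rw [div_le_one hfpos]; linarith
      linarith
    -- choose the element of Fs covering the most sets
    have hFsne : Fs.Nonempty := by
      rcases (S i₀).eq_empty_or_nonempty with h | ⟨x, hx⟩
      · rw [h] at hSi₀; simp at hSi₀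
      · exact ⟨x, hsub i₀ hi₀ hx⟩
    obtain ⟨x, hxF, hxmax⟩ := Finset.exists_max_image Fs
      (fun x => (I.filter (fun i => x ∈ S i)).card) hFsne
    -- averaging
    have key : ∑ y ∈ Fs, (I.filter (fun i => y ∈ S i)).card = ∑ i ∈ I, (S i).card := by
      simp_rw [Finset.card_filter]
      rw [Finset.sum_comm]
      refine Finset.sum_congr rfl fun i hi => ?_
      rw [← Finset.card_filter, Finset.filter_mem_eq_inter,
        Finset.inter_eq_right.mpr (hsub i hi)]
    have havg : μ * I.card ≤ (Fs.card : ℝ) * (I.filter (fun i => x ∈ S i)).card := by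
      have h1 : μ * I.card ≤ ∑ i ∈ I, ((S i).card : ℝ) := by
        rw [mul_comm]
        calc (I.card : ℝ) * μ = ∑ _i ∈ I, μ := by rw [Finset.sum_const, nsmul_eq_mul]
        _ ≤ _ := Finset.sum_le_sum hcard
      have h2 : ∑ i ∈ I, ((S i).card : ℝ) = ∑ y ∈ Fs, ((I.filter (fun i => y ∈ S i)).card : ℝ) := by
        have := congrArg (fun m : ℕ => (m:ℝ)) key
        push_cast at this
        exact this.symm
      have h3 : ∑ y ∈ Fs, ((I.filter (fun i => y ∈ S i)).card : ℝ)
          ≤ (Fs.card : ℝ) * (I.filter (fun i => x ∈ S i)).card := by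
        calc ∑ y ∈ Fs, ((I.filter (fun i => y ∈ S i)).card : ℝ)
            ≤ ∑ _y ∈ Fs, ((I.filter (fun i => x ∈ S i)).card : ℝ) :=
              Finset.sum_le_sum (fun y hy => by exact_mod_cast hxmax y hy)
          _ = _ := by rw [Finset.sum_const, nsmul_eq_mul]
      linarith
    set I' := I.filter (fun i => x ∉ S i) with hI'
    have hI'card : (I'.card : ℝ) ≤ (1 - μ / Fs.card) * I.card := by
      have hsplit : I'.card + (I.filter (fun i => x ∈ S i)).card = I.card := by
        rw [hI']
        rw [add_comm]
        exact Finset.card_filter_add_card_filter_not (fun i => x ∈ S i)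
      have : (I'.card : ℝ) = I.card - (I.filter (fun i => x ∈ S i)).card := by
        have := hsplit; push_cast [← this]; ring
      rw [this]
      have : μ / Fs.card * I.card ≤ (I.filter (fun i => x ∈ S i)).card := by
        rw [div_mul_eq_mul_div, div_le_iff₀ hfpos, mul_comm ((_ : ℕ):ℝ)]
        exact havg
      linarith
    obtain ⟨T', hT'sub, hT'card, hT'bound⟩ := ih I' S
      (fun i hi => hsub i (Finset.mem_of_mem_filter i hi))
      (fun i hi => hcard i (Finset.mem_of_mem_filter i hi))
    refine ⟨insert x T', Finset.insert_subset hxF hT'sub,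
      le_trans (Finset.card_insert_le _ _) (by omega), ?_⟩
    have hmono : I.filter (fun i => Disjoint (S i) (insert x T'))
        ⊆ I'.filter (fun i => Disjoint (S i) T') := by
      intro i hi
      rw [Finset.mem_filter] at hi ⊢
      obtain ⟨hiI, hdisj⟩ := hi
      have hx' : x ∉ S i := fun hx' =>
        (Finset.disjoint_left.mp hdisj hx') (Finset.mem_insert_self _ _)
      exact ⟨Finset.mem_filter.mpr ⟨hiI, hx'⟩,
        hdisj.mono_right (Finset.subset_insert _ _)⟩
    calc ((I.filter (fun i => Disjoint (S i) (insert x T'))).card : ℝ)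
        ≤ ((I'.filter (fun i => Disjoint (S i) T')).card : ℝ) := by
          exact_mod_cast Finset.card_le_card hmono
      _ ≤ (1 - μ / Fs.card) ^ k * I'.card := hT'bound
      _ ≤ (1 - μ / Fs.card) ^ k * ((1 - μ / Fs.card) * I.card) := by
          exact mul_le_mul_of_nonneg_left hI'card (pow_nonneg hr0 k)
      _ = (1 - μ / Fs.card) ^ (k+1) * I.card := by ring

/-- Hitting version: if the bound is `< 1`, the set `T` meets every `S i`. -/
lemma greedy_hitting [DecidableEq α] [DecidableEq ι]
    (μ : ℝ) (hμ : 0 < μ) (Fs : Finset α) (k : ℕ) (I : Finset ι) (S : ι → Finset α)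
    (hsub : ∀ i ∈ I, S i ⊆ Fs) (hcard : ∀ i ∈ I, μ ≤ ((S i).card : ℝ))
    (hbound : (1 - μ / Fs.card) ^ k * I.card < 1) :
    ∃ T ⊆ Fs, T.card ≤ k ∧ ∀ i ∈ I, ∃ z ∈ S i, z ∈ T := by
  obtain ⟨T, hTsub, hTcard, hT⟩ := greedy_transversal μ hμ Fs k I S hsub hcard
  refine ⟨T, hTsub, hTcard, fun i hi => ?_⟩
  have h0 : (I.filter (fun i => Disjoint (S i) T)).card = 0 := by
    by_contra h
    have h1 : (1:ℝ) ≤ (I.filter (fun i => Disjoint (S i) T)).card := by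
      have : 1 ≤ (I.filter (fun i => Disjoint (S i) T)).card := Nat.one_le_iff_ne_zero.mpr h
      exact_mod_cast this
    linarith
  have hempty : I.filter (fun i => Disjoint (S i) T) = ∅ := Finset.card_eq_zero.mp h0
  have : ¬ Disjoint (S i) T := by
    intro hd
    have : i ∈ I.filter (fun i => Disjoint (S i) T) := Finset.mem_filter.mpr ⟨hi, hd⟩
    rw [hempty] at this; exact absurd this (Finset.notMem_empty i)
  obtain ⟨z, hz1, hz2⟩ := Finset.not_disjoint_iff.mp this
  exact ⟨z, hz1, hz2⟩


set_option maxHeartbeats 2000000 in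
/-- **Lemma (splitting an absorbing family).**  Let `D'` be a digraph on at most `n`
vertices containing a family `F` of `f` pairwise vertex-disjoint absorbing 4-paths with
`γ²n ≤ f` and `|F| ≤ γn`, such that every ordered vertex pair `(u, v)` of `D'` has at
least `γ²n` absorbers in `F`.  Then for any `β > 0` and any integer `l` with
`βf < l < (1-β)f`, and `n` sufficiently large, `F` can be split as `F = F₁ ∪ F₂` with
`|F₁| = l`, `|F₂| = f - l`, so that every ordered pair `(u, v)` of vertices of
`D' - V(F)` has an absorber in each of `F₁` and `F₂`. -/
theorem absorbing_family_partition (γ β : ℝ) (hγ0 : 0 < γ) (hγ1 : γ < 1) (hβ : 0 < β) :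
    ∃ n₀ : ℕ, ∀ n : ℕ, n₀ ≤ n →
      ∀ (V : Type) [Fintype V] (A : V → V → Prop),
        Fintype.card V ≤ n →
        ∀ F : Set (V × V × V × V),
          (∀ z ∈ F, IsFourPath A z) →
          (∀ z ∈ F, ∀ z' ∈ F, z ≠ z' → ∀ x ∈ quadList z, x ∉ quadList z') →
          γ^2 * n ≤ (F.ncard : ℝ) →
          (F.ncard : ℝ) ≤ γ * n →
          (∀ u v : V, γ^2 * n ≤ (({z ∈ F | AbsorbsPair A z u v}).ncard : ℝ)) →
          ∀ l : ℕ, β * F.ncard < (l : ℝ) → (l : ℝ) < (1 - β) * F.ncard →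
            ∃ F₁ F₂ : Set (V × V × V × V),
              F₁ ∪ F₂ = F ∧ Disjoint F₁ F₂ ∧
              F₁.ncard = l ∧ F₂.ncard = F.ncard - l ∧
              ∀ u v : V,
                (∀ z ∈ F, u ∉ quadList z) → (∀ z ∈ F, v ∉ quadList z) →
                (∃ z ∈ F₁, AbsorbsPair A z u v) ∧ (∃ z ∈ F₂, AbsorbsPair A z u v) := by
  -- constants
  set β' : ℝ := min β (1/2) with hβ'def
  have hβ'0 : 0 < β' := lt_min hβ (by norm_num)
  have hβ'β : β' ≤ β := min_le_left _ _
  have hβ'half : β' ≤ 1/2 := min_le_right _ _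
  set c : ℝ := β' * γ^2 / 2 with hcdef
  have hc0 : 0 < c := by positivity
  set ρ : ℝ := 1 - γ/2 with hρdef
  have hρ0 : 0 < ρ := by rw [hρdef]; linarith
  have hρ1 : ρ < 1 := by rw [hρdef]; linarith
  set q : ℝ := ρ ^ c with hqdef
  have hq1 : q < 1 := Real.rpow_lt_one hρ0.le hρ1 hc0
  have hq0 : 0 < q := Real.rpow_pos_of_pos hρ0 c
  -- eventually n² qⁿ < 1
  have htend : Filter.Tendsto (fun n : ℕ => (n:ℝ)^2 * q^n) Filter.atTop (nhds 0) := by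
    apply Summable.tendsto_atTop_zero
    apply summable_pow_mul_geometric_of_norm_lt_one
    rw [Real.norm_eq_abs, abs_of_pos hq0]; exact hq1
  have hev : ∀ᶠ n : ℕ in Filter.atTop, (n:ℝ)^2 * q^n < 1 :=
    htend.eventually (gt_mem_nhds (by norm_num : (0:ℝ) < 1))
  obtain ⟨N₁, hN₁⟩ := Filter.eventually_atTop.mp hev
  refine ⟨max N₁ ⌈(1/c : ℝ)⌉₊, fun n hn V _ A hcardV F _ _ hflow hfup habs l hl1 hl2 => ?_⟩
  -- basic numeric facts
  have hnN₁ : N₁ ≤ n := le_trans (le_max_left _ _) hn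
  have hnc : (1/c : ℝ) ≤ n := by
    calc (1/c : ℝ) ≤ (⌈(1/c : ℝ)⌉₊ : ℝ) := Nat.le_ceil _
    _ ≤ n := by exact_mod_cast le_trans (le_max_right _ _) hn
  have hcn1 : 1 ≤ c * n := by
    have h := (div_le_iff₀ hc0).mp hnc
    linarith
  have hn0 : (0:ℝ) < n := lt_of_lt_of_le (by positivity) hnc
  -- finset versions
  have hFin : F.Finite := Set.toFinite F
  set Fs : Finset (V × V × V × V) := hFin.toFinset with hFsdef
  have hFcard : F.ncard = Fs.card := Set.ncard_eq_toFinset_card F hFin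
  set f : ℕ := Fs.card with hfdef
  have hflow' : γ^2 * n ≤ (f:ℝ) := by rw [← hFcard] at *; exact hflow
  have hfup' : (f:ℝ) ≤ γ * n := by rw [← hFcard] at *; exact hfup
  have hl1' : β * f < (l:ℝ) := by rw [← hFcard] at *; exact hl1
  have hl2' : (l:ℝ) < (1-β) * f := by rw [← hFcard] at *; exact hl2
  have hγ2n : (0:ℝ) < γ^2 * n := by positivity
  have hfpos : (0:ℝ) < f := lt_of_lt_of_le hγ2n hflow'
  -- the absorber finsets
  set S : V × V → Finset (V × V × V × V) :=
    fun p => Fs.filter (fun z => AbsorbsPair A z p.1 p.2) with hSdef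
  have hSsub : ∀ p : V × V, S p ⊆ Fs := fun p => Finset.filter_subset _ _
  have hScard : ∀ p : V × V, γ^2 * n ≤ ((S p).card : ℝ) := by
    intro p
    have h1 := habs p.1 p.2
    have heq : {z ∈ F | AbsorbsPair A z p.1 p.2}.ncard = (S p).card := by
      have hfin2 : {z ∈ F | AbsorbsPair A z p.1 p.2}.Finite := Set.toFinite _
      rw [Set.ncard_eq_toFinset_card _ hfin2]
      congr 1
      ext z
      simp only [hSdef, Finset.mem_filter, hFsdef, Set.Finite.mem_toFinset,
        Set.mem_setOf_eq]
    rw [heq] at h1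
    exact h1
  -- k
  set k : ℕ := ⌈c * n⌉₊ with hkdef
  have hk_low : c * n ≤ (k:ℝ) := Nat.le_ceil _
  have hk_up : (k:ℝ) ≤ c * n + 1 := le_of_lt (Nat.ceil_lt_add_one (by positivity))
  have hk2cn : (k:ℝ) ≤ 2 * (c * n) := by linarith
  have h2cn : 2 * (c * n) = β' * (γ^2 * n) := by rw [hcdef]; ring
  have hkβ'f : (k:ℝ) ≤ β' * f := by
    rw [h2cn] at hk2cn
    calc (k:ℝ) ≤ β' * (γ^2 * n) := hk2cn
    _ ≤ β' * f := mul_le_mul_of_nonneg_left hflow' hβ'0.le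
  have hkl : k ≤ l := by
    have h : (k:ℝ) < (l:ℝ) := by
      calc (k:ℝ) ≤ β' * f := hkβ'f
      _ ≤ β * f := mul_le_mul_of_nonneg_right hβ'β hfpos.le
      _ < l := hl1'
    exact_mod_cast h.le
  have hklf : k + l ≤ f := by
    have : (k:ℝ) + l < f := by
      have hβf : β' * (f:ℝ) ≤ β * f := mul_le_mul_of_nonneg_right hβ'β hfpos.le
      nlinarith
    exact_mod_cast le_of_lt this
  have hkγ2n2 : (k:ℝ) ≤ γ^2 * n / 2 := by
    have : β' * (γ^2*n) ≤ (1/2) * (γ^2*n) := mul_le_mul_of_nonneg_right hβ'half hγ2n.le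
    rw [h2cn] at hk2cn
    linarith
  -- card of the index set
  have hIcard : ((Finset.univ : Finset (V × V)).card : ℝ) ≤ (n:ℝ)^2 := by
    have h1 : (Finset.univ : Finset (V × V)).card = Fintype.card V * Fintype.card V := by
      rw [Finset.card_univ, Fintype.card_prod]
    rw [h1, pow_two]
    exact_mod_cast Nat.mul_le_mul hcardV hcardV
  -- ρ ^ k * n² < 1
  have hkey : ρ ^ k * (n:ℝ)^2 < 1 := by
    have h1 : ρ ^ k ≤ q ^ n := by
      have e1 : ρ ^ k = ρ ^ ((k:ℕ):ℝ) := by rw [Real.rpow_natCast]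
      have e2 : q ^ n = ρ ^ (c * n) := by
        rw [hqdef, ← Real.rpow_natCast (ρ ^ c) n, ← Real.rpow_mul hρ0.le]
      rw [e1, e2]
      exact Real.rpow_le_rpow_of_exponent_ge hρ0 hρ1.le hk_low
    have h2 := hN₁ n hnN₁
    have h3 : ρ ^ k * (n:ℝ)^2 ≤ q ^ n * (n:ℝ)^2 :=
      mul_le_mul_of_nonneg_right h1 (by positivity)
    linarith [h3, h2]
  -- first transversal
  have hbound₁ : (1 - γ^2 * n / (f:ℝ)) ^ k * ((Finset.univ : Finset (V × V)).card : ℝ) < 1 := by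
    have hr0 : 0 ≤ 1 - γ^2 * n / (f:ℝ) := by
      rw [sub_nonneg, div_le_one hfpos]; exact hflow'
    have hrρ : 1 - γ^2 * n / (f:ℝ) ≤ ρ := by
      rw [hρdef, sub_le_sub_iff_left, le_div_iff₀ hfpos]
      calc γ/2 * f ≤ γ/2 * (γ * n) := by
            apply mul_le_mul_of_nonneg_left hfup' (by positivity)
        _ = γ^2 * n / 2 := by ring
        _ ≤ γ^2 * n := by linarith
    calc (1 - γ^2 * n / (f:ℝ)) ^ k * ((Finset.univ : Finset (V × V)).card : ℝ)
        ≤ ρ ^ k * (n:ℝ)^2 := by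
          apply mul_le_mul (pow_le_pow_left₀ hr0 hrρ k) hIcard (by positivity)
            (pow_nonneg (le_trans hr0 hrρ) k)
      _ < 1 := hkey
  obtain ⟨T₁, hT₁sub, hT₁card, hT₁hit⟩ :=
    greedy_hitting (γ^2 * n) hγ2n Fs k Finset.univ S (fun p _ => hSsub p)
      (fun p _ => hScard p) hbound₁
  -- second transversal inside Fs \ T₁
  set Fs₂ : Finset (V × V × V × V) := Fs \ T₁ with hFs₂def
  set S₂ : V × V → Finset (V × V × V × V) := fun p => S p \ T₁ with hS₂def
  have hf₂card : Fs₂.card = f - T₁.card := Finset.card_sdiff_of_subset hT₁sub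
  have hf₂real : (f:ℝ) - (k:ℝ) ≤ (Fs₂.card : ℝ) := by
    rw [hf₂card]
    have hT₁f : T₁.card ≤ f := Finset.card_le_card hT₁sub
    have : ((f - T₁.card : ℕ) : ℝ) = (f:ℝ) - T₁.card := by
      push_cast [Nat.cast_sub hT₁f]; ring
    rw [this]
    have : (T₁.card : ℝ) ≤ k := by exact_mod_cast hT₁card
    linarith
  have hf₂up : (Fs₂.card : ℝ) ≤ (f:ℝ) := by
    exact_mod_cast Finset.card_le_card (Finset.sdiff_subset)
  have hμ₂pos : (0:ℝ) < γ^2 * n - k := by linarith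
  have hS₂card : ∀ p : V × V, γ^2 * n - k ≤ ((S₂ p).card : ℝ) := by
    intro p
    have h1 : (S p).card ≤ (S p \ T₁).card + T₁.card := Finset.card_le_card_sdiff_add_card
    have h2 : ((S p).card : ℝ) ≤ ((S p \ T₁).card : ℝ) + T₁.card := by exact_mod_cast h1
    have h3 : (T₁.card : ℝ) ≤ k := by exact_mod_cast hT₁card
    have := hScard p
    rw [hS₂def]
    simp only []
    linarith
  have hbound₂ : (1 - (γ^2 * n - k) / (Fs₂.card:ℝ)) ^ k
      * ((Finset.univ : Finset (V × V)).card : ℝ) < 1 := by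
    have hf₂pos : (0:ℝ) < Fs₂.card := by linarith
    have hr0 : 0 ≤ 1 - (γ^2 * n - k) / (Fs₂.card:ℝ) := by
      rw [sub_nonneg, div_le_one hf₂pos]
      linarith
    have hrρ : 1 - (γ^2 * n - k) / (Fs₂.card:ℝ) ≤ ρ := by
      rw [hρdef, sub_le_sub_iff_left, le_div_iff₀ hf₂pos]
      calc γ/2 * Fs₂.card ≤ γ/2 * f := by
            apply mul_le_mul_of_nonneg_left hf₂up (by positivity)
        _ ≤ γ/2 * (γ * n) := by
            apply mul_le_mul_of_nonneg_left hfup' (by positivity)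
        _ = γ^2 * n / 2 := by ring
        _ ≤ γ^2 * n - k := by linarith
    calc (1 - (γ^2 * n - k) / (Fs₂.card:ℝ)) ^ k * ((Finset.univ : Finset (V × V)).card : ℝ)
        ≤ ρ ^ k * (n:ℝ)^2 := by
          apply mul_le_mul (pow_le_pow_left₀ hr0 hrρ k) hIcard (by positivity)
            (pow_nonneg (le_trans hr0 hrρ) k)
      _ < 1 := hkey
  obtain ⟨T₂, hT₂sub, hT₂card, hT₂hit⟩ :=
    greedy_hitting (γ^2 * n - k) hμ₂pos Fs₂ k Finset.univ S₂
      (fun p _ => Finset.sdiff_subset_sdiff (hSsub p) le_rfl)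
      (fun p _ => hS₂card p) hbound₂
  -- build the partition
  have hT₂Fs : T₂ ⊆ Fs := hT₂sub.trans Finset.sdiff_subset
  have hT₁T₂ : Disjoint T₁ T₂ := by
    refine Finset.disjoint_left.mpr fun z hz1 hz2 => ?_
    exact (Finset.mem_sdiff.mp (hT₂sub hz2)).2 hz1
  have hunion_card : (T₁ ∪ T₂).card ≤ T₁.card + T₂.card := Finset.card_union_le _ _
  have hunion_sub : T₁ ∪ T₂ ⊆ Fs := Finset.union_subset hT₁sub hT₂Fs
  have hrest : (Fs \ (T₁ ∪ T₂)).card = f - (T₁ ∪ T₂).card := Finset.card_sdiff_of_subset hunion_sub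
  have hT₁l : T₁.card ≤ l := le_trans hT₁card hkl
  have hpick : l - T₁.card ≤ (Fs \ (T₁ ∪ T₂)).card := by
    have h1 : T₂.card ≤ k := hT₂card
    have h2 : T₁.card ≤ k := hT₁card
    omega
  obtain ⟨P, hPsub, hPcard⟩ := Finset.exists_subset_card_eq hpick
  set F₁s : Finset (V × V × V × V) := T₁ ∪ P with hF₁def
  have hPFs : P ⊆ Fs := hPsub.trans Finset.sdiff_subset
  have hF₁sub : F₁s ⊆ Fs := Finset.union_subset hT₁sub hPFs
  have hT₁P : Disjoint T₁ P := by
    refine Finset.disjoint_left.mpr fun z hz1 hz2 => ?_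
    have := Finset.mem_sdiff.mp (hPsub hz2)
    exact this.2 (Finset.mem_union_left _ hz1)
  have hF₁card : F₁s.card = l := by
    rw [hF₁def, Finset.card_union_of_disjoint hT₁P, hPcard]
    omega
  set F₂s : Finset (V × V × V × V) := Fs \ F₁s with hF₂def
  have hF₂card : F₂s.card = f - l := by
    rw [hF₂def, Finset.card_sdiff_of_subset hF₁sub, hF₁card]
  have hT₂F₂ : T₂ ⊆ F₂s := by
    intro z hz
    rw [hF₂def, Finset.mem_sdiff]
    refine ⟨hT₂Fs hz, fun hz' => ?_⟩
    rcases Finset.mem_union.mp hz' with h | h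
    · exact Finset.disjoint_left.mp hT₁T₂ h hz
    · exact (Finset.mem_sdiff.mp (hPsub h)).2 (Finset.mem_union_right _ hz)
  refine ⟨↑F₁s, ↑F₂s, ?_, ?_, ?_, ?_, ?_⟩
  · rw [← Finset.coe_union, Finset.union_sdiff_of_subset hF₁sub,
      Set.Finite.coe_toFinset]
  · exact_mod_cast Finset.disjoint_coe.mpr (Finset.disjoint_sdiff)
  · rw [Set.ncard_coe_finset]; exact hF₁card
  · rw [Set.ncard_coe_finset, hFcard]; exact hF₂card
  · intro u v _ _
    constructor
    · obtain ⟨z, hz1, hz2⟩ := hT₁hit (u, v) (Finset.mem_univ _)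
      have := Finset.mem_filter.mp hz1
      exact ⟨z, Finset.mem_coe.mpr (Finset.mem_union_left _ hz2), this.2⟩
    · obtain ⟨z, hz1, hz2⟩ := hT₂hit (u, v) (Finset.mem_univ _)
      have hzS : z ∈ S (u, v) := (Finset.mem_sdiff.mp hz1).1
      have := Finset.mem_filter.mp hzS
      exact ⟨z, Finset.mem_coe.mpr (hT₂F₂ hz2), this.2⟩
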